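/- Let S be a local domain with maximal ideal m_S = xS principal, and let P be a prime ideal of S with P = P S_P (P is an ideal of S_P) and such that every fractional S-ideal contained in S_P is comparable to P. If S/P is a DVR whose maximal ideal is generated by the image of x, then P ⊆ xS and in fact P ⊊ xS = m_S; consequently every nonmaximal prime of S is contained in P. -/

import Mathlib

set_option maxHeartbeats 800000

/-- Let `S` be a local domain with principal maximal ideal `m_S = xS`, and let `P` be a
prime of `S` with `P = P S_P` and such that every fractional `S`-ideal contained in `S_P`
is comparable to `P`.  If `S/P` is a DVR whose maximal ideal is generated by the image of
`x`, then `P ⊊ xS = m_S`; consequently every nonmaximal prime of `S` is contained in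
`P`. -/
theorem nonmaximal_primes_below_of_quotient_dvr
    (S : Type) [CommRing S] [IsDomain S] [IsLocalRing S]
    (x : S) (hmax : IsLocalRing.maximalIdeal S = Ideal.span {x})
    (P : Ideal S) [hPp : P.IsPrime]
    (hPloc : ∀ y ∈ Ideal.map (algebraMap S (Localization.AtPrime P)) P,
      ∃ p ∈ P, y = algebraMap S (Localization.AtPrime P) p)
    (hcomp : ∀ J : Submodule S (Localization.AtPrime P),
      (∃ d : S, d ≠ 0 ∧ ∀ y ∈ J, ∃ s : S,
        algebraMap S (Localization.AtPrime P) d * y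
          = algebraMap S (Localization.AtPrime P) s) →
      (J ≤ Submodule.map (Algebra.linearMap S (Localization.AtPrime P)) P ∨
        Submodule.map (Algebra.linearMap S (Localization.AtPrime P)) P ≤ J))
    (hDVR : IsDiscreteValuationRing (S ⧸ P))
    (hquotmax : (Ideal.span {Ideal.Quotient.mk P x}).IsMaximal) :
    P < Ideal.span {x} ∧
      ∀ L : Ideal S, L.IsPrime → L ≠ IsLocalRing.maximalIdeal S → L ≤ P := by
  -- Krull intersection in S/P
  have hbot : (⨅ n : ℕ, (Ideal.span {Ideal.Quotient.mk P x}) ^ n) = ⊥ :=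
    Ideal.iInf_pow_eq_bot_of_isDomain _ hquotmax.ne_top
  -- any nonmaximal prime L ≤ P
  have key : ∀ L : Ideal S, L.IsPrime → L ≠ IsLocalRing.maximalIdeal S → L ≤ P := by
    intro L hL hLne
    have hLm : L ≤ IsLocalRing.maximalIdeal S := IsLocalRing.le_maximalIdeal hL.ne_top
    have hxL : x ∉ L := by
      intro hx
      apply hLne
      apply le_antisymm hLm
      rw [hmax]
      exact (Ideal.span_singleton_le_iff_mem L).mpr hx
    intro a ha
    -- a ∈ x^n S for all n
    have hpow : ∀ n : ℕ, ∃ b ∈ L, a = x ^ n * b := by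
      intro n
      induction n with
      | zero => exact ⟨a, ha, by ring⟩
      | succ n ih =>
        obtain ⟨b, hb, hab⟩ := ih
        have : b ∈ Ideal.span {x} := by
          rw [← hmax]; exact hLm hb
        obtain ⟨c, hc⟩ := Ideal.mem_span_singleton'.mp this
        have hcL : c ∈ L := by
          have : x * c ∈ L := by rw [mul_comm, hc]; exact hb
          rcases hL.mem_or_mem this with h | h
          · exact absurd h hxL
          · exact h
        exact ⟨c, hcL, by rw [hab, ← hc]; ring⟩
    -- image of a in S/P lies in every power of the maximal ideal
    have : Ideal.Quotient.mk P a ∈ (⨅ n : ℕ, (Ideal.span {Ideal.Quotient.mk P x}) ^ n) := by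
      rw [Ideal.mem_iInf]
      intro n
      obtain ⟨b, hb, hab⟩ := hpow n
      rw [Ideal.span_singleton_pow, Ideal.mem_span_singleton]
      exact ⟨Ideal.Quotient.mk P b, by rw [← map_pow, ← map_mul, hab]⟩
    rw [hbot] at this
    exact (Ideal.Quotient.eq_zero_iff_mem).mp this
  constructor
  · have hPm : P ≤ Ideal.span {x} := by
      rw [← hmax]; exact IsLocalRing.le_maximalIdeal hPp.ne_top
    refine lt_of_le_of_ne hPm ?_
    intro h
    have : x ∈ P := by rw [h]; exact Ideal.subset_span rfl
    have : Ideal.Quotient.mk P x = 0 := (Ideal.Quotient.eq_zero_iff_mem).mpr this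
    rw [this] at hquotmax
    rw [Ideal.span_singleton_eq_bot.mpr rfl] at hquotmax
    exact IsDiscreteValuationRing.not_a_field (S ⧸ P)
      ((IsLocalRing.eq_maximalIdeal hquotmax).symm)
  · exact key
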